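/- For any tree T on h ≥ 1 vertices and any finite graph G, hom(T,G) ≤ Σ_{v ∈ V(G)} d_v^{h−1}, where d_v is the degree of v in G. -/

import Mathlib

open Finset SimpleGraph
open scoped Classical

section SidorenkoAux

-- AM-GM with natural exponents
lemma amgm_nat (a b : ℕ) {x y : ℝ} (hx : 0 ≤ x) (hy : 0 ≤ y) :
    ((a : ℝ) + b) * (x ^ a * y ^ b) ≤ a * x ^ (a + b) + b * y ^ (a + b) := by
  rcases Nat.eq_zero_or_pos a with ha | ha
  · subst ha; simp
  rcases Nat.eq_zero_or_pos b with hb | hb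
  · subst hb; simp
  have hab : (0:ℝ) < (a:ℝ) + b := by positivity
  have h1 : x ^ a = (x ^ (a+b)) ^ ((a:ℝ)/((a:ℝ)+b)) := by
    rw [← Real.rpow_natCast x (a+b), ← Real.rpow_natCast x a, ← Real.rpow_mul hx]
    congr 1
    push_cast
    field_simp
  have h2 : y ^ b = (y ^ (a+b)) ^ ((b:ℝ)/((a:ℝ)+b)) := by
    rw [← Real.rpow_natCast y (a+b), ← Real.rpow_natCast y b, ← Real.rpow_mul hy]
    congr 1
    push_cast
    field_simp
  have key := Real.geom_mean_le_arith_mean2_weighted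
    (w₁ := (a:ℝ)/((a:ℝ)+b)) (w₂ := (b:ℝ)/((a:ℝ)+b))
    (p₁ := x ^ (a+b)) (p₂ := y ^ (a+b))
    (by positivity) (by positivity) (by positivity) (by positivity) (by field_simp)
  rw [← h1, ← h2] at key
  have := mul_le_mul_of_nonneg_left key (le_of_lt hab)
  calc ((a:ℝ) + b) * (x ^ a * y ^ b) ≤ ((a:ℝ)+b) * ((a:ℝ)/((a:ℝ)+b) * x ^ (a+b) + (b:ℝ)/((a:ℝ)+b) * y ^ (a+b)) := this
    _ = a * x ^ (a + b) + b * y ^ (a + b) := by field_simp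


section TreeLemmas
variable {VT : Type*} [Fintype VT] {T : SimpleGraph VT}


lemma degree_pos_of_tree (hT : T.IsTree) (h2 : 2 ≤ Fintype.card VT) (v : VT) :
    1 ≤ T.degree v := by
  obtain ⟨w, hw⟩ := Fintype.exists_ne_of_one_lt_card h2 v
  obtain ⟨walk⟩ := hT.isConnected.preconnected v w
  have : 0 < T.degree v := by
    rw [SimpleGraph.degree_pos_iff_exists_adj]
    cases walk with
    | nil => exact absurd rfl hw.symm
    | cons h q => exact ⟨_, h⟩
  exact this

lemma exists_two_leaves (hT : T.IsTree) (h2 : 2 ≤ Fintype.card VT) :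
    ∃ u₁ u₂ : VT, u₁ ≠ u₂ ∧ T.degree u₁ = 1 ∧ T.degree u₂ = 1 := by
  have hedge : T.edgeFinset.card + 1 = Fintype.card VT := hT.card_edgeFinset
  have hsum : ∑ v : VT, T.degree v = 2 * T.edgeFinset.card :=
    T.sum_degrees_eq_twice_card_edges
  set L : Finset VT := univ.filter (fun v => T.degree v = 1) with hL
  have key : ∀ v : VT, 2 ≤ T.degree v + (if T.degree v = 1 then 1 else 0) := by
    intro v
    have h1 := degree_pos_of_tree hT h2 v
    by_cases h : T.degree v = 1
    · simp [h]
    · simp only [h, if_false, add_zero]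
      omega
  have hsum2 : 2 * Fintype.card VT ≤ ∑ v : VT, (T.degree v + (if T.degree v = 1 then 1 else 0)) := by
    calc 2 * Fintype.card VT = ∑ _v : VT, 2 := by simp [mul_comm]
      _ ≤ _ := Finset.sum_le_sum (fun v _ => key v)
  rw [Finset.sum_add_distrib] at hsum2
  have hcardL : ∑ v : VT, (if T.degree v = 1 then 1 else 0) = L.card := by
    rw [hL, Finset.card_filter]
  have h2L : 2 ≤ L.card := by omega
  obtain ⟨u₁, hu₁, u₂, hu₂, hne⟩ := Finset.one_lt_card.mp h2L
  simp only [hL, Finset.mem_filter] at hu₁ hu₂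
  exact ⟨u₁, u₂, hne, hu₁.2, hu₂.2⟩

end TreeLemmas

section TreeLemmas2

variable {VT : Type*} {T : SimpleGraph VT}

lemma exists_adj_mem_support {x y : VT} (w : T.Walk x y) (hxy : x ≠ y) :
    ∃ z, T.Adj x z ∧ z ∈ w.support := by
  cases w with
  | nil => exact absurd rfl hxy
  | cons h q => exact ⟨_, h, by simp [SimpleGraph.Walk.support_cons,
      SimpleGraph.Walk.start_mem_support]⟩

lemma exists_adj_mem_support_tail {x y : VT} (w : T.Walk x y) (hxy : x ≠ y) :
    ∃ z, T.Adj x z ∧ z ∈ w.support.tail := by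
  cases w with
  | nil => exact absurd rfl hxy
  | cons h q => exact ⟨_, h, by simp [SimpleGraph.Walk.support_cons,
      SimpleGraph.Walk.start_mem_support]⟩

/-- a path between two non-`u` vertices avoids a leaf `u` -/
lemma path_avoids_leaf {u q : VT} (hq : T.Adj u q) (huniq : ∀ b, T.Adj u b → b = q)
    {a b : VT} (ha : a ≠ u) (hb : b ≠ u) (p : T.Walk a b) (hp : p.IsPath) :
    u ∉ p.support := by
  intro hu
  have hspec := p.take_spec hu
  set w1 := p.takeUntil u hu with hw1
  set w2 := p.dropUntil u hu with hw2
  -- neighbor from w1 side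
  obtain ⟨z1, hz1, hz1m⟩ := exists_adj_mem_support w1.reverse (Ne.symm ha)
  have hz1m' : z1 ∈ w1.support := by
    rwa [SimpleGraph.Walk.support_reverse, List.mem_reverse] at hz1m
  -- neighbor from w2 side
  obtain ⟨z2, hz2, hz2m⟩ := exists_adj_mem_support_tail w2 (Ne.symm hb)
  have hq1 : z1 = q := huniq _ hz1
  have hq2 : z2 = q := huniq _ hz2
  subst hq1; subst hq2
  have hnodup : p.support.Nodup := hp.support_nodup
  rw [← hspec, SimpleGraph.Walk.support_append] at hnodup
  rw [List.nodup_append] at hnodup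
  exact hnodup.2.2 _ hz1m' _ hz2m rfl

lemma reachable_induce {s : Set VT} {a b : VT} (w : T.Walk a b)
    (hs : ∀ x ∈ w.support, x ∈ s) (hain : a ∈ s) (hbin : b ∈ s) :
    (T.induce s).Reachable ⟨a, hain⟩ ⟨b, hbin⟩ := by
  induction w with
  | nil => rfl
  | @cons x y z h q ih =>
    have hy : y ∈ s := hs y (by simp [SimpleGraph.Walk.support_cons,
      SimpleGraph.Walk.start_mem_support])
    have hadj : (T.induce s).Adj ⟨x, hain⟩ ⟨y, hy⟩ := by
      simp only [SimpleGraph.comap_adj]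
      exact h
    exact hadj.reachable.trans (ih (fun t ht => hs t (by simp [SimpleGraph.Walk.support_cons, ht])) hy hbin)

lemma induce_tree [Fintype VT] (hT : T.IsTree) {u : VT} (hdeg : T.degree u = 1)
    (h2 : 2 ≤ Fintype.card VT) :
    (T.induce {x | x ≠ u}).IsTree := by
  -- unique neighbor
  have hpos : 0 < T.degree u := by omega
  rw [SimpleGraph.degree_pos_iff_exists_adj] at hpos
  obtain ⟨q, hq⟩ := hpos
  have huniq : ∀ b, T.Adj u b → b = q := by
    intro b hb
    have h1 : (T.neighborFinset u).card = 1 := by rwa [SimpleGraph.card_neighborFinset_eq_degree]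
    have := Finset.card_le_one.mp h1.le b (by rwa [SimpleGraph.mem_neighborFinset]) q
      (by rwa [SimpleGraph.mem_neighborFinset])
    exact this
  constructor
  · rw [SimpleGraph.connected_iff]
    refine ⟨?_, ⟨⟨q, hq.ne'⟩⟩⟩
    rintro ⟨a, ha⟩ ⟨b, hb⟩
    obtain ⟨w, hw⟩ := (hT.existsUnique_path a b).exists
    have havoid : u ∉ w.support := path_avoids_leaf hq huniq ha hb w hw
    exact reachable_induce w (fun x hx => by
      simp only [Set.mem_setOf_eq]
      rintro rfl
      exact havoid hx) ha hb
  · intro v c hc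
    have h2 := SimpleGraph.Walk.IsCycle.map
      (f := (SimpleGraph.Embedding.induce (G := T) {x | x ≠ u}).toHom)
      (SimpleGraph.Embedding.induce (G := T) {x | x ≠ u}).injective hc
    exact hT.2 _ h2
end TreeLemmas2

section Defs

variable {VG : Type*} [Fintype VG] (G : SimpleGraph VG)

noncomputable def homSet {VT : Type*} [Fintype VT] (T : SimpleGraph VT) : Finset (VT → VG) :=
  Finset.univ.filter (fun f => ∀ a b, T.Adj a b → G.Adj (f a) (f b))

lemma mem_homSet {VT : Type*} [Fintype VT] {T : SimpleGraph VT} {f : VT → VG} :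
    f ∈ homSet G T ↔ ∀ a b, T.Adj a b → G.Adj (f a) (f b) := by
  simp [homSet]

noncomputable def SW {VT : Type*} [Fintype VT] (T : SimpleGraph VT) (k : VT → ℕ) : ℝ :=
  ∑ f ∈ homSet G T, ∏ t, (G.degree (f t) : ℝ) ^ (k t)

lemma peel {VT : Type*} [Fintype VT] (T : SimpleGraph VT) (k : VT → ℕ) (u p : VT)
    (hk : k u = 0) (hup : T.Adj u p) (huniq : ∀ b, T.Adj u b → b = p) :
    SW G T k = SW G (T.induce {x | x ≠ u})
      (Function.update (fun t : ↥{x | x ≠ u} => k t.val) ⟨p, hup.ne'⟩ (k p + 1)) := by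
  classical
  set p' : ↥{x | x ≠ u} := ⟨p, hup.ne'⟩ with hp'
  set κ : ↥{x | x ≠ u} → ℕ := fun t => k t.val with hκ
  set E : (VT → VG) ≃ (↥{x | x ≠ u} → VG) × VG :=
    { toFun := fun f => (fun t => f t.val, f u)
      invFun := fun q x => if h : x = u then q.2 else q.1 ⟨x, h⟩
      left_inv := by
        intro f; funext x
        by_cases h : x = u <;> simp [h]
      right_inv := by
        rintro ⟨g, y⟩
        refine Prod.ext ?_ ?_
        · funext t
          simp [dif_neg t.prop]
        · simp } with hE
  have hfval : ∀ (g : ↥{x | x ≠ u} → VG) (y : VG) (t : ↥{x | x ≠ u}),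
      E.symm (g, y) t.val = g t := by
    intro g y t
    simp only [hE, Equiv.coe_fn_symm_mk]
    rw [dif_neg t.prop]
  have hfu : ∀ (g : ↥{x | x ≠ u} → VG) (y : VG), E.symm (g, y) u = y := by
    intro g y
    simp [hE]
  -- step 1 : write SW as a full sum
  have step1 : SW G T k
      = ∑ f : VT → VG, (if f ∈ homSet G T then ∏ t, (G.degree (f t) : ℝ) ^ (k t) else 0) := by
    rw [SW, Finset.sum_ite_mem, Finset.univ_inter]
  rw [step1, ← Equiv.sum_comp E.symm
      (fun f => if f ∈ homSet G T then ∏ t, (G.degree (f t) : ℝ) ^ (k t) else 0),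
    Fintype.sum_prod_type]
  -- step 2 : inner sums
  have hmem : ∀ (g : ↥{x | x ≠ u} → VG) (y : VG),
      E.symm (g, y) ∈ homSet G T
        ↔ (g ∈ homSet G (T.induce {x | x ≠ u}) ∧ G.Adj (g p') y) := by
    intro g y
    rw [mem_homSet, mem_homSet]
    constructor
    · intro hf
      refine ⟨fun a b hab => ?_, ?_⟩
      · have : T.Adj a.val b.val := hab
        have h2 := hf _ _ this
        rwa [hfval, hfval] at h2
      · have h2 := hf p u hup.symm
        have h3 : E.symm (g, y) p = g p' := hfval g y p'
        rwa [h3, hfu] at h2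
    · rintro ⟨hg, hadj⟩ a b hab
      by_cases ha : a = u
      · subst ha
        have hb : b = p := huniq b hab
        have h3 : E.symm (g, y) b = g p' := by rw [hb]; exact hfval g y p'
        rw [h3, hfu]
        exact hadj.symm
      · by_cases hb : b = u
        · subst hb
          have ha2 : a = p := huniq a hab.symm
          have h3 : E.symm (g, y) a = g p' := by rw [ha2]; exact hfval g y p'
          rw [h3, hfu]
          exact hadj
        · have h2 : (T.induce {x | x ≠ u}).Adj ⟨a, ha⟩ ⟨b, hb⟩ := hab
          have h3 := hg _ _ h2
          rwa [← hfval g y ⟨a, ha⟩, ← hfval g y ⟨b, hb⟩] at h3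
  have hweight : ∀ (g : ↥{x | x ≠ u} → VG) (y : VG),
      ∏ t, (G.degree (E.symm (g, y) t) : ℝ) ^ (k t)
        = ∏ t, (G.degree (g t) : ℝ) ^ (κ t) := by
    intro g y
    rw [← Finset.prod_erase_mul Finset.univ _ (Finset.mem_univ u)]
    rw [hfu, hk, pow_zero, mul_one]
    rw [Finset.prod_subtype (Finset.univ.erase u)
      (p := fun x => x ∈ {x | x ≠ u})
      (by intro x; simp [Set.mem_setOf_eq])
      (fun x => (G.degree (E.symm (g, y) x) : ℝ) ^ (k x))]
    apply Finset.prod_congr rfl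
    intro t _
    rw [hfval]
  -- compute the double sum
  have inner : ∀ g : ↥{x | x ≠ u} → VG,
      (∑ y : VG, if E.symm (g, y) ∈ homSet G T then ∏ t, (G.degree (E.symm (g, y) t) : ℝ) ^ (k t) else 0)
      = (if g ∈ homSet G (T.induce {x | x ≠ u})
          then (∏ t, (G.degree (g t) : ℝ) ^ (κ t)) * (G.degree (g p') : ℝ) else 0) := by
    intro g
    by_cases hg : g ∈ homSet G (T.induce {x | x ≠ u})
    · simp only [hg, if_true]
      have : ∀ y : VG, (if E.symm (g, y) ∈ homSet G T
            then ∏ t, (G.degree (E.symm (g, y) t) : ℝ) ^ (k t) else 0)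
          = (if G.Adj (g p') y then (∏ t, (G.degree (g t) : ℝ) ^ (κ t)) else 0) := by
        intro y
        rw [hweight g y]
        congr 1
        exact propext ⟨fun h => ((hmem g y).mp h).2, fun h => (hmem g y).mpr ⟨hg, h⟩⟩
      rw [Finset.sum_congr rfl (fun y _ => this y)]
      rw [Finset.sum_ite, Finset.sum_const_zero, add_zero, Finset.sum_const]
      rw [← SimpleGraph.neighborFinset_eq_filter, SimpleGraph.card_neighborFinset_eq_degree]
      rw [nsmul_eq_mul, mul_comm]
    · simp only [hg, if_false]
      apply Finset.sum_eq_zero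
      intro y _
      rw [if_neg]
      rw [hmem]
      exact fun hc => hg hc.1
  rw [Finset.sum_congr rfl (fun g _ => inner g)]
  have hupdate : ∀ g : ↥{x | x ≠ u} → VG,
      (∏ t, (G.degree (g t) : ℝ) ^ (Function.update κ ⟨p, hup.ne'⟩ (k p + 1) t))
      = (∏ t, (G.degree (g t) : ℝ) ^ (κ t)) * (G.degree (g p') : ℝ) := by
    intro g
    rw [← Finset.mul_prod_erase Finset.univ _ (Finset.mem_univ p'),
        ← Finset.mul_prod_erase Finset.univ (fun t => (G.degree (g t) : ℝ) ^ (κ t))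
          (Finset.mem_univ p')]
    have h2 : ∀ t ∈ Finset.univ.erase p',
        (G.degree (g t) : ℝ) ^ (Function.update κ ⟨p, hup.ne'⟩ (k p + 1) t)
          = (G.degree (g t) : ℝ) ^ (κ t) := by
      intro t ht
      rw [Function.update_of_ne (Finset.mem_erase.mp ht).1]
    rw [Finset.prod_congr rfl h2]
    have h1 : Function.update κ ⟨p, hup.ne'⟩ (k p + 1) p' = k p + 1 :=
      Function.update_self _ _ _
    rw [h1]
    have h3 : κ p' = k p := rfl
    rw [pow_succ, h3]
    ring
  rw [SW, Finset.sum_ite_mem, Finset.univ_inter]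
  apply Finset.sum_congr rfl
  intro g hg
  rw [hupdate g]

lemma SW_amgm {VT : Type*} [Fintype VT] (T : SimpleGraph VT) (k : VT → ℕ) (u₁ u₂ : VT)
    (hne : u₁ ≠ u₂) :
    ((k u₁ : ℝ) + k u₂) * SW G T k
      ≤ (k u₁) * SW G T (Function.update (Function.update k u₂ 0) u₁ (k u₁ + k u₂))
        + (k u₂) * SW G T (Function.update (Function.update k u₁ 0) u₂ (k u₁ + k u₂)) := by
  classical
  set k1 := Function.update (Function.update k u₂ 0) u₁ (k u₁ + k u₂) with hk1
  set k2 := Function.update (Function.update k u₁ 0) u₂ (k u₁ + k u₂) with hk2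
  rw [SW, SW, SW, Finset.mul_sum, Finset.mul_sum, Finset.mul_sum, ← Finset.sum_add_distrib]
  apply Finset.sum_le_sum
  intro f _
  have hu2mem : u₂ ∈ Finset.univ.erase u₁ := Finset.mem_erase.mpr ⟨hne.symm, Finset.mem_univ u₂⟩
  set P : ℝ := ∏ t ∈ (Finset.univ.erase u₁).erase u₂, (G.degree (f t) : ℝ) ^ (k t) with hP
  have hPnn : 0 ≤ P := Finset.prod_nonneg (fun t _ => by positivity)
  have e0 : ∏ t, (G.degree (f t) : ℝ) ^ (k t)
      = (G.degree (f u₁) : ℝ) ^ (k u₁) * ((G.degree (f u₂) : ℝ) ^ (k u₂) * P) := by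
    rw [← Finset.mul_prod_erase Finset.univ _ (Finset.mem_univ u₁),
        ← Finset.mul_prod_erase (Finset.univ.erase u₁) _ hu2mem]
  have e1 : ∏ t, (G.degree (f t) : ℝ) ^ (k1 t)
      = (G.degree (f u₁) : ℝ) ^ (k u₁ + k u₂) * P := by
    rw [← Finset.mul_prod_erase Finset.univ _ (Finset.mem_univ u₁),
        ← Finset.mul_prod_erase (Finset.univ.erase u₁) _ hu2mem]
    have v1 : k1 u₁ = k u₁ + k u₂ := by rw [hk1, Function.update_self]
    have v2 : k1 u₂ = 0 := by
      rw [hk1, Function.update_of_ne hne.symm, Function.update_self]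
    have v3 : ∀ t ∈ (Finset.univ.erase u₁).erase u₂, (G.degree (f t) : ℝ) ^ (k1 t)
        = (G.degree (f t) : ℝ) ^ (k t) := by
      intro t ht
      have h1 := (Finset.mem_erase.mp ht).1
      have h2 := (Finset.mem_erase.mp (Finset.mem_erase.mp ht).2).1
      rw [hk1, Function.update_of_ne h2, Function.update_of_ne h1]
    rw [v1, v2, Finset.prod_congr rfl v3, pow_zero, one_mul]
  have e2 : ∏ t, (G.degree (f t) : ℝ) ^ (k2 t)
      = (G.degree (f u₂) : ℝ) ^ (k u₁ + k u₂) * P := by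
    have hu1mem : u₁ ∈ Finset.univ.erase u₂ := Finset.mem_erase.mpr ⟨hne, Finset.mem_univ u₁⟩
    rw [← Finset.mul_prod_erase Finset.univ _ (Finset.mem_univ u₂),
        ← Finset.mul_prod_erase (Finset.univ.erase u₂) _ hu1mem]
    have v1 : k2 u₂ = k u₁ + k u₂ := by rw [hk2, Function.update_self]
    have v2 : k2 u₁ = 0 := by
      rw [hk2, Function.update_of_ne hne, Function.update_self]
    have v3 : ∀ t ∈ (Finset.univ.erase u₂).erase u₁, (G.degree (f t) : ℝ) ^ (k2 t)
        = (G.degree (f t) : ℝ) ^ (k t) := by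
      intro t ht
      have h1 := (Finset.mem_erase.mp ht).1
      have h2 := (Finset.mem_erase.mp (Finset.mem_erase.mp ht).2).1
      rw [hk2, Function.update_of_ne h2, Function.update_of_ne h1]
    have hPalt : ∏ t ∈ (Finset.univ.erase u₂).erase u₁, (G.degree (f t) : ℝ) ^ (k t) = P := by
      rw [hP, Finset.erase_right_comm]
    rw [v1, v2, Finset.prod_congr rfl v3, pow_zero, one_mul, hPalt]
  rw [e0, e1, e2]
  have base := amgm_nat (k u₁) (k u₂)
    (x := (G.degree (f u₁) : ℝ)) (y := (G.degree (f u₂) : ℝ)) (by positivity) (by positivity)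
  nlinarith [mul_le_mul_of_nonneg_right base hPnn]

lemma sum_k1 {VT : Type*} [Fintype VT] (k : VT → ℕ) (u₁ u₂ : VT) (hne : u₁ ≠ u₂) :
    ∑ t, Function.update (Function.update k u₂ 0) u₁ (k u₁ + k u₂) t = ∑ t, k t := by
  classical
  have hu2mem : u₂ ∈ Finset.univ.erase u₁ := Finset.mem_erase.mpr ⟨hne.symm, Finset.mem_univ u₂⟩
  rw [Finset.sum_update_of_mem (Finset.mem_univ u₁), Finset.sdiff_singleton_eq_erase]
  rw [Finset.sum_update_of_mem hu2mem, Finset.sdiff_singleton_eq_erase]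
  rw [← Finset.add_sum_erase Finset.univ k (Finset.mem_univ u₁),
      ← Finset.add_sum_erase (Finset.univ.erase u₁) k hu2mem]
  omega

lemma filter_k1 {VT : Type*} [Fintype VT] (k : VT → ℕ) (u₁ u₂ : VT) (hne : u₁ ≠ u₂)
    (h1 : k u₁ ≠ 0) :
    Finset.univ.filter
        (fun t => Function.update (Function.update k u₂ 0) u₁ (k u₁ + k u₂) t ≠ 0)
      = (Finset.univ.filter (fun t => k t ≠ 0)).erase u₂ := by
  classical
  ext t
  simp only [Finset.mem_filter, Finset.mem_erase, Finset.mem_univ, true_and]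
  by_cases ht1 : t = u₁
  · subst ht1
    simp [Function.update_self, hne, h1]
  · by_cases ht2 : t = u₂
    · subst ht2
      simp [Function.update_of_ne ht1, Function.update_self]
    · simp [Function.update_of_ne ht1, Function.update_of_ne ht2, ht2]

universe uvt

lemma leaf_peel_case {VG : Type*} [Fintype VG] (G : SimpleGraph VG)
    {VT : Type uvt} [Fintype VT] {T : SimpleGraph VT} (hT : T.IsTree)
    (h2 : 2 ≤ Fintype.card VT) (k : VT → ℕ) (u : VT)
    (hdeg : T.degree u = 1) (hk0 : k u = 0)
    (IH : ∀ (VT' : Type uvt) [Fintype VT'] (T' : SimpleGraph VT'), T'.IsTree →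
      ∀ k' : VT' → ℕ, Fintype.card VT' = Fintype.card VT - 1 →
      SW G T' k' ≤ ∑ v : VG, (G.degree v : ℝ) ^ (Fintype.card VT' - 1 + ∑ t, k' t)) :
    SW G T k ≤ ∑ v : VG, (G.degree v : ℝ) ^ (Fintype.card VT - 1 + ∑ t, k t) := by
  classical
  have hpos' : 0 < T.degree u := by omega
  rw [SimpleGraph.degree_pos_iff_exists_adj] at hpos'
  obtain ⟨p, hp⟩ := hpos'
  have huniq : ∀ b, T.Adj u b → b = p := by
    intro b hb
    have h1 : (T.neighborFinset u).card = 1 := by rwa [SimpleGraph.card_neighborFinset_eq_degree]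
    exact Finset.card_le_one.mp h1.le b (by rwa [SimpleGraph.mem_neighborFinset]) p
      (by rwa [SimpleGraph.mem_neighborFinset])
  have hT' : (T.induce {x | x ≠ u}).IsTree := induce_tree hT hdeg h2
  have hcard' : Fintype.card ↥{x : VT | x ≠ u} = Fintype.card VT - 1 := by
    simp only [Set.coe_setOf]
    rw [Fintype.card_subtype_compl (p := fun x => x = u)]
    simp [Fintype.card_subtype_eq]
  set p' : ↥{x : VT | x ≠ u} := ⟨p, hp.ne'⟩ with hp'
  set k' : ↥{x : VT | x ≠ u} → ℕ :=
    Function.update (fun t : ↥{x : VT | x ≠ u} => k t.val) p' (k p + 1) with hk'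
  have hsumVT : ∑ t : VT, k t = ∑ t : ↥{x : VT | x ≠ u}, k t.val := by
    rw [← Finset.sum_subtype (Finset.univ.erase u) (p := fun x => x ∈ {x : VT | x ≠ u})
      (by intro x; simp [Set.mem_setOf_eq]) k]
    rw [← Finset.add_sum_erase Finset.univ k (Finset.mem_univ u), hk0, zero_add]
  have hsum' : ∑ t, k' t = (∑ t : VT, k t) + 1 := by
    rw [hk', Finset.sum_update_of_mem (Finset.mem_univ p'), Finset.sdiff_singleton_eq_erase]
    rw [← Finset.add_sum_erase Finset.univ (fun t : ↥{x : VT | x ≠ u} => k t.val)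
      (Finset.mem_univ p')] at hsumVT
    have hpval : k p'.val = k p := rfl
    omega
  have hpeel := peel G T k u p hk0 hp huniq
  rw [hpeel]
  have := IH ↥{x : VT | x ≠ u} (T.induce {x | x ≠ u}) hT' k' hcard'
  refine le_trans this (le_of_eq ?_)
  congr 1
  funext v
  congr 1
  rw [hcard', hsum']
  omega

lemma main_ind {VG : Type*} [Fintype VG] (G : SimpleGraph VG) (μ : ℕ) :
    ∀ (VT : Type uvt) [Fintype VT] (T : SimpleGraph VT), T.IsTree →
      ∀ k : VT → ℕ,
      Fintype.card VT ^ 2 + (Finset.univ.filter fun t => k t ≠ 0).card ≤ μ →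
      SW G T k ≤ ∑ v : VG, (G.degree v : ℝ) ^ (Fintype.card VT - 1 + ∑ t, k t) := by
  induction μ using Nat.strong_induction_on with
  | _ μ ih =>
  intro VT _ T hT k hμ
  classical
  have hpos : 0 < Fintype.card VT := Fintype.card_pos_iff.mpr hT.isConnected.nonempty
  by_cases hcard1 : Fintype.card VT = 1
  · -- single vertex
    obtain ⟨t0, ht0⟩ := Fintype.card_eq_one_iff.mp hcard1
    haveI : Unique VT := ⟨⟨t0⟩, ht0⟩
    have hhom : homSet G T = Finset.univ := by
      rw [homSet]
      apply Finset.eq_univ_iff_forall.mpr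
      intro f
      simp only [Finset.mem_filter, Finset.mem_univ, true_and]
      intro a b hab
      have hab2 : a = b := Subsingleton.elim a b
      rw [hab2] at hab
      exact absurd hab (T.irrefl)
    rw [SW, hhom]
    have hW : ∀ f : VT → VG, ∏ t, (G.degree (f t) : ℝ) ^ (k t)
        = (G.degree (f default) : ℝ) ^ (k default) := fun f => Fintype.prod_unique _
    rw [Finset.sum_congr rfl (fun f _ => hW f)]
    rw [Fintype.sum_equiv (Equiv.funUnique VT VG)
      (fun f => (G.degree (f default) : ℝ) ^ (k default))
      (fun v => (G.degree v : ℝ) ^ (k default)) (fun f => rfl)]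
    have hexp : Fintype.card VT - 1 + ∑ t, k t = k default := by
      rw [hcard1, Fintype.sum_unique]
      omega
    rw [hexp]
    
  · have h2 : 2 ≤ Fintype.card VT := by omega
    obtain ⟨u₁, u₂, hne, hd1, hd2⟩ := exists_two_leaves hT h2
    -- the inductive hypothesis for smaller vertex count
    have IH' : ∀ (VT' : Type uvt) [Fintype VT'] (T' : SimpleGraph VT'), T'.IsTree →
        ∀ k' : VT' → ℕ, Fintype.card VT' = Fintype.card VT - 1 →
        SW G T' k' ≤ ∑ v : VG, (G.degree v : ℝ) ^ (Fintype.card VT' - 1 + ∑ t, k' t) := by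
      intro VT' _ T' hT' k' hc'
      have hmeas : Fintype.card VT' ^ 2 + (Finset.univ.filter fun t => k' t ≠ 0).card < μ := by
        have hf : (Finset.univ.filter fun t : VT' => k' t ≠ 0).card ≤ Fintype.card VT' :=
          le_trans (Finset.card_filter_le _ _) (le_of_eq rfl)
        have h3 : Fintype.card VT' + 1 = Fintype.card VT := by omega
        have hsq : Fintype.card VT' ^ 2 + Fintype.card VT' < Fintype.card VT ^ 2 := by
          rw [← h3]
          nlinarith
        have := le_trans (Nat.add_le_add_left hf _) (le_of_lt hsq)
        omega
      exact ih _ hmeas VT' T' hT' k' (le_refl _)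
    by_cases hk1 : k u₁ = 0
    · exact leaf_peel_case G hT h2 k u₁ hd1 hk1 IH'
    · by_cases hk2 : k u₂ = 0
      · exact leaf_peel_case G hT h2 k u₂ hd2 hk2 IH'
      · -- AM-GM step
        set k1 := Function.update (Function.update k u₂ 0) u₁ (k u₁ + k u₂) with hk1def
        set k2 := Function.update (Function.update k u₁ 0) u₂ (k u₁ + k u₂) with hk2def
        have hmem1 : u₁ ∈ Finset.univ.filter (fun t => k t ≠ 0) := by simp [hk1]
        have hmem2 : u₂ ∈ Finset.univ.filter (fun t => k t ≠ 0) := by simp [hk2]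
        have hfpos : 1 ≤ (Finset.univ.filter (fun t => k t ≠ 0)).card :=
          Finset.card_pos.mpr ⟨u₁, hmem1⟩
        have hmeas1 : Fintype.card VT ^ 2 + (Finset.univ.filter fun t => k1 t ≠ 0).card < μ := by
          rw [hk1def, filter_k1 k u₁ u₂ hne hk1, Finset.card_erase_of_mem hmem2]
          omega
        have hk2' : k2 = Function.update (Function.update k u₁ 0) u₂ (k u₂ + k u₁) := by
          rw [hk2def, add_comm]
        have hmeas2 : Fintype.card VT ^ 2 + (Finset.univ.filter fun t => k2 t ≠ 0).card < μ := by
          rw [hk2', filter_k1 k u₂ u₁ hne.symm hk2, Finset.card_erase_of_mem hmem1]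
          omega
        have hb1 := ih _ hmeas1 VT T hT k1 (le_refl _)
        have hb2 := ih _ hmeas2 VT T hT k2 (le_refl _)
        have hsum1 : ∑ t, k1 t = ∑ t, k t := by
          rw [hk1def]; exact sum_k1 k u₁ u₂ hne
        have hsum2 : ∑ t, k2 t = ∑ t, k t := by
          rw [hk2']; exact sum_k1 k u₂ u₁ hne.symm
        rw [hsum1] at hb1
        rw [hsum2] at hb2
        set X := ∑ v : VG, (G.degree v : ℝ) ^ (Fintype.card VT - 1 + ∑ t, k t) with hX
        have hamgm := SW_amgm G T k u₁ u₂ hne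
        rw [← hk1def, ← hk2def] at hamgm
        have habpos : (0:ℝ) < (k u₁ : ℝ) + (k u₂ : ℝ) := by
          have : 1 ≤ k u₁ := Nat.one_le_iff_ne_zero.mpr hk1
          have : 1 ≤ k u₂ := Nat.one_le_iff_ne_zero.mpr hk2
          positivity
        have hcomb : ((k u₁ : ℝ) + k u₂) * SW G T k ≤ ((k u₁ : ℝ) + k u₂) * X := by
          calc ((k u₁ : ℝ) + k u₂) * SW G T k
              ≤ (k u₁ : ℝ) * SW G T k1 + (k u₂ : ℝ) * SW G T k2 := hamgm
            _ ≤ (k u₁ : ℝ) * X + (k u₂ : ℝ) * X := by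
                have := mul_le_mul_of_nonneg_left hb1 (by positivity : (0:ℝ) ≤ (k u₁ : ℝ))
                have := mul_le_mul_of_nonneg_left hb2 (by positivity : (0:ℝ) ≤ (k u₂ : ℝ))
                linarith
            _ = ((k u₁ : ℝ) + k u₂) * X := by ring
        exact le_of_mul_le_mul_left hcomb habpos

end Defs

end SidorenkoAux

/-- Sidorenko's tree inequality: for a tree `T` on `h ≥ 1` vertices and any finite
graph `G`, `hom(T,G) ≤ ∑_v d_v^(h-1)`. -/
theorem sidorenko_tree
    {VT VG : Type*} [Fintype VT] [Fintype VG]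
    (T : SimpleGraph VT) (G : SimpleGraph VG)
    (h : ℕ) (hh : 1 ≤ h) (hcard : Fintype.card VT = h)
    (hTtree : T.IsTree) :
    (Finset.univ.filter
      (fun f : VT → VG => ∀ a b, T.Adj a b → G.Adj (f a) (f b))).card
      ≤ ∑ v : VG, (G.degree v) ^ (h - 1) := by
  classical
  have hmain := main_ind G (Fintype.card VT ^ 2 + Fintype.card VT) VT T hTtree
    (fun _ => 0)
    (by
      have := Finset.card_filter_le (Finset.univ : Finset VT)
        (fun t => (fun _ : VT => (0:ℕ)) t ≠ 0)
      have h2 : (Finset.univ : Finset VT).card = Fintype.card VT := Finset.card_univ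
      beta_reduce at this ⊢
      omega)
  have hSW : SW G T (fun _ => 0) = ((homSet G T).card : ℝ) := by
    rw [SW]
    simp
  have hexp : Fintype.card VT - 1 + ∑ _t : VT, (0:ℕ) = h - 1 := by
    rw [hcard]; simp
  rw [hSW, hexp] at hmain
  have hcast : ∑ v : VG, (G.degree v : ℝ) ^ (h - 1)
      = ((∑ v : VG, G.degree v ^ (h - 1) : ℕ) : ℝ) := by
    push_cast
    rfl
  rw [hcast] at hmain
  exact_mod_cast hmain
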